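/- Let N ≥ 2 and let y ∈ ℝ^N with y_1 > … > y_{N−1} > |y_N|. Then [y_N = 0 and 4 Σ_{j ≠ i} 1/(y_i² − y_j²) = 1 for every i = 1,…,N−1] holds if and only if [y_N = 0 and L_{N−1}^{(1)}(y_i²/2) = 0 for every i = 1,…,N−1] (equivalently, y_N = 0 and the numbers y_1²/2 > … > y_{N−1}²/2 are exactly the N−1 ordered zeros of the Laguerre polynomial L_{N−1}^{(1)}). -/

import Mathlib

open Polynomial Finset

noncomputable def lagC (n k : ℕ) : ℝ :=
  ((∏ m ∈ Finset.Ico k n, ((1:ℝ) + (m : ℝ) + 1)) / ((n - k).factorial : ℝ))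
    * ((-1) ^ k / (k.factorial : ℝ))

noncomputable def lagPoly (n : ℕ) : ℝ[X] :=
  ∑ k ∈ Finset.range (n + 1), C (lagC n k) * X ^ k

lemma laguerre_eq_eval (n : ℕ) (t : ℝ) :
    (∑ k ∈ Finset.range (n + 1),
      ((∏ m ∈ Finset.Ico k n, ((1:ℝ) + (m : ℝ) + 1)) / ((n - k).factorial : ℝ))
        * ((-t) ^ k / (k.factorial : ℝ))) = (lagPoly n).eval t := by
  rw [lagPoly, eval_finset_sum]
  refine Finset.sum_congr rfl fun k _ => ?_
  simp only [eval_mul, eval_C, eval_pow, eval_X, lagC, neg_pow t, mul_comm, neg_one_pow_mul_eq_zero_iff]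
  ring

lemma lagPoly_coeff (n k : ℕ) (hk : k ≤ n) : (lagPoly n).coeff k = lagC n k := by
  rw [lagPoly, finset_sum_coeff]
  simp only [coeff_C_mul, coeff_X_pow]
  rw [Finset.sum_eq_single k]
  · simp
  · intro b _ hb; simp [Ne.symm hb]
  · intro h; exact absurd (Finset.mem_range.mpr (by omega)) h

lemma lagPoly_coeff_top (n : ℕ) : (lagPoly n).coeff n = (-1)^n / (n.factorial : ℝ) := by
  rw [lagPoly_coeff n n le_rfl, lagC]
  simp

lemma lagPoly_coeff_gt (n k : ℕ) (hk : n < k) : (lagPoly n).coeff k = 0 := by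
  rw [lagPoly, finset_sum_coeff]
  apply Finset.sum_eq_zero
  intro b hb
  have : b ≠ k := by have := Finset.mem_range.mp hb; omega
  simp [coeff_C_mul, coeff_X_pow, Ne.symm this]

noncomputable def Dop (n : ℕ) (p : ℝ[X]) : ℝ[X] :=
  X * derivative (derivative p) + (C 2 - X) * derivative p + C (n : ℝ) * p

lemma Dop_coeff (n : ℕ) (p : ℝ[X]) (k : ℕ) :
    (Dop n p).coeff k
      = ((k : ℝ) + 1) * ((k : ℝ) + 2) * p.coeff (k + 1) + ((n : ℝ) - (k : ℝ)) * p.coeff k := by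
  rcases k with _ | k
  · simp only [Dop, coeff_add, sub_mul, coeff_sub, coeff_C_mul, coeff_X_mul_zero, coeff_derivative]
    push_cast
    ring
  · simp only [Dop, coeff_add, sub_mul, coeff_sub, coeff_C_mul, coeff_X_mul, coeff_derivative]
    push_cast
    ring
lemma lagC_rec (n k : ℕ) (hk : k < n) :
    ((k : ℝ) + 1) * ((k : ℝ) + 2) * lagC n (k + 1) + ((n : ℝ) - (k : ℝ)) * lagC n k = 0 := by
  have hprod : (∏ m ∈ Finset.Ico k n, ((1:ℝ) + (m : ℝ) + 1))
      = ((k : ℝ) + 2) * ∏ m ∈ Finset.Ico (k + 1) n, ((1:ℝ) + (m : ℝ) + 1) := by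
    rw [Finset.prod_eq_prod_Ico_succ_bot hk]
    congr 1
    ring
  have hfac : ((n - k).factorial : ℝ) = ((n : ℝ) - (k : ℝ)) * ((n - (k + 1)).factorial : ℝ) := by
    have h1 : n - k = (n - (k + 1)) + 1 := by omega
    rw [h1, Nat.factorial_succ]
    push_cast
    have : ((n - (k+1) : ℕ) : ℝ) = (n : ℝ) - (k : ℝ) - 1 := by
      have : (k:ℝ) + 1 ≤ n := by exact_mod_cast Nat.succ_le_of_lt hk
      push_cast [Nat.cast_sub (by omega : k + 1 ≤ n)]
      ring
    rw [this]; ring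
  have hkfac : ((k + 1).factorial : ℝ) = ((k : ℝ) + 1) * (k.factorial : ℝ) := by
    rw [Nat.factorial_succ]; push_cast; ring
  have h1 : (k.factorial : ℝ) ≠ 0 := Nat.cast_ne_zero.mpr (Nat.factorial_ne_zero k)
  have h2 : ((n - (k + 1)).factorial : ℝ) ≠ 0 := Nat.cast_ne_zero.mpr (Nat.factorial_ne_zero _)
  have h3 : (n : ℝ) - (k : ℝ) ≠ 0 := by
    have : (k:ℝ) < n := by exact_mod_cast hk
    intro h; linarith
  have h4 : (k : ℝ) + 1 ≠ 0 := by positivity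
  rw [lagC, lagC, hprod, hfac, hkfac, pow_succ]
  field_simp
  ring

lemma Dop_lagPoly (n : ℕ) : Dop n (lagPoly n) = 0 := by
  ext k
  rw [Dop_coeff, coeff_zero]
  rcases lt_trichotomy k n with h | rfl | h
  · rw [lagPoly_coeff n (k+1) (by omega), lagPoly_coeff n k (by omega)]
    exact lagC_rec n k h
  · rw [lagPoly_coeff_gt k (k+1) (by omega)]
    simp
  · rw [lagPoly_coeff_gt n (k+1) (by omega), lagPoly_coeff_gt n k h]
    simp

lemma Dop_sub_C_mul (n : ℕ) (c : ℝ) (p q : ℝ[X]) :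
    Dop n (p - C c * q) = Dop n p - C c * Dop n q := by
  simp only [Dop, derivative_sub, derivative_mul, derivative_C, zero_mul, zero_add]
  ring

lemma deriv_eval_prod {ι : Type*} [DecidableEq ι] (s : Finset ι) (a : ι → ℝ) (z : ℝ) :
    (derivative (∏ j ∈ s, (X - C (a j)))).eval z
      = ∑ j ∈ s, ∏ k ∈ s.erase j, (z - a k) := by
  induction s using Finset.induction_on with
  | empty => simp
  | @insert i s hi ih =>
    rw [Finset.prod_insert hi, derivative_mul, eval_add, eval_mul, eval_mul,
      Finset.sum_insert hi, Finset.erase_insert hi]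
    have hd : derivative (X - C (a i)) = 1 := by simp
    rw [hd, eval_one, one_mul, eval_sub, eval_X, eval_C, ih, eval_prod]
    simp only [eval_sub, eval_X, eval_C]
    rw [Finset.mul_sum]
    congr 1
    refine Finset.sum_congr rfl fun j hj => ?_
    rw [Finset.erase_insert_of_ne (by rintro rfl; exact hi hj),
      Finset.prod_insert (fun h => hi (Finset.mem_of_mem_erase h))]

noncomputable def Ppoly (n : ℕ) (x : Fin n → ℝ) : ℝ[X] := ∏ i, (X - C (x i))

noncomputable def Qpoly (n : ℕ) (x : Fin n → ℝ) (i : Fin n) : ℝ[X] :=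
  ∏ j ∈ Finset.univ.erase i, (X - C (x j))

lemma P_eq (n : ℕ) (x : Fin n → ℝ) (i : Fin n) :
    Ppoly n x = (X - C (x i)) * Qpoly n x i :=
  (Finset.mul_prod_erase _ _ (Finset.mem_univ i)).symm

lemma Q_eval (n : ℕ) (x : Fin n → ℝ) (i : Fin n) :
    (Qpoly n x i).eval (x i) = ∏ j ∈ Finset.univ.erase i, (x i - x j) := by
  simp [Qpoly, eval_prod]

lemma sub_ne (n : ℕ) (x : Fin n → ℝ) (hinj : Function.Injective x) {i j : Fin n}
    (hj : j ∈ Finset.univ.erase i) : x i - x j ≠ 0 :=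
  sub_ne_zero.mpr fun h => (Finset.ne_of_mem_erase hj) (hinj h.symm)

lemma Q_eval_ne (n : ℕ) (x : Fin n → ℝ) (hinj : Function.Injective x) (i : Fin n) :
    (Qpoly n x i).eval (x i) ≠ 0 := by
  rw [Q_eval]
  exact Finset.prod_ne_zero_iff.mpr fun j hj => sub_ne n x hinj hj

lemma Q_deriv_eval (n : ℕ) (x : Fin n → ℝ) (hinj : Function.Injective x) (i : Fin n) :
    (derivative (Qpoly n x i)).eval (x i)
      = (Qpoly n x i).eval (x i) * ∑ j ∈ Finset.univ.erase i, 1 / (x i - x j) := by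
  rw [Qpoly, deriv_eval_prod, Finset.mul_sum]
  refine Finset.sum_congr rfl fun j hj => ?_
  have hne : x i - x j ≠ 0 := sub_ne n x hinj hj
  have hsplit := Finset.mul_prod_erase (Finset.univ.erase i) (fun k => x i - x k) hj
  rw [eval_prod]
  simp only [eval_sub, eval_X, eval_C]
  rw [mul_one_div, ← hsplit, mul_comm (x i - x j), mul_div_assoc, div_self hne, mul_one]

lemma P_eval (n : ℕ) (x : Fin n → ℝ) (i : Fin n) : (Ppoly n x).eval (x i) = 0 := by
  rw [P_eq n x i]; simp

lemma P'_eval (n : ℕ) (x : Fin n → ℝ) (i : Fin n) :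
    (derivative (Ppoly n x)).eval (x i) = (Qpoly n x i).eval (x i) := by
  rw [P_eq n x i, derivative_mul]
  simp

lemma P''_eval (n : ℕ) (x : Fin n → ℝ) (i : Fin n) :
    (derivative (derivative (Ppoly n x))).eval (x i)
      = 2 * (derivative (Qpoly n x i)).eval (x i) := by
  rw [P_eq n x i]
  simp only [derivative_mul, derivative_sub, derivative_X, derivative_C, sub_zero, one_mul,
    derivative_add, eval_add, eval_mul, eval_sub, eval_X, eval_C, sub_self, zero_mul, mul_zero]
  ring

lemma Dop_P_eval (n : ℕ) (x : Fin n → ℝ) (hinj : Function.Injective x) (i : Fin n) :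
    (Dop n (Ppoly n x)).eval (x i)
      = (Qpoly n x i).eval (x i)
          * (2 * x i * (∑ j ∈ Finset.univ.erase i, 1 / (x i - x j)) + 2 - x i) := by
  rw [Dop]
  simp only [eval_add, eval_mul, eval_sub, eval_X, eval_C, P'_eval, P''_eval, P_eval,
    Q_deriv_eval n x hinj]
  ring

lemma Dop_P_eval_zero_iff (n : ℕ) (x : Fin n → ℝ) (hinj : Function.Injective x)
    (i : Fin n) (hx0 : x i ≠ 0) :
    (Dop n (Ppoly n x)).eval (x i) = 0
      ↔ 2 * (∑ j ∈ Finset.univ.erase i, 1 / (x i - x j)) + 2 / x i = 1 := by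
  rw [Dop_P_eval n x hinj i, mul_eq_zero, or_iff_right (Q_eval_ne n x hinj i)]
  have hfac : 2 * x i * (∑ j ∈ Finset.univ.erase i, 1 / (x i - x j)) + 2 - x i
      = x i * ((2 * (∑ j ∈ Finset.univ.erase i, 1 / (x i - x j)) + 2 / x i) - 1) := by
    field_simp
  rw [hfac, mul_eq_zero, or_iff_right hx0, sub_eq_zero]

lemma P_monic (n : ℕ) (x : Fin n → ℝ) : (Ppoly n x).Monic :=
  monic_prod_of_monic _ _ fun i _ => monic_X_sub_C (x i)

lemma P_natDegree (n : ℕ) (x : Fin n → ℝ) : (Ppoly n x).natDegree = n := by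
  rw [Ppoly, natDegree_prod _ _ fun i _ => X_sub_C_ne_zero (x i)]
  simp

lemma lagPoly_natDegree_le (n : ℕ) : (lagPoly n).natDegree ≤ n :=
  natDegree_le_iff_coeff_eq_zero.mpr fun m hm => lagPoly_coeff_gt n m hm

lemma Dop_C_mul (n : ℕ) (c : ℝ) (q : ℝ[X]) : Dop n (C c * q) = C c * Dop n q := by
  simp only [Dop, derivative_mul, derivative_C, zero_mul, zero_add]
  ring

lemma DopP_natDegree_lt (n : ℕ) (hn : 1 ≤ n) (x : Fin n → ℝ) :
    (Dop n (Ppoly n x)).natDegree < n := by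
  have h : (Dop n (Ppoly n x)).natDegree ≤ n - 1 := by
    refine natDegree_le_iff_coeff_eq_zero.mpr fun m hm => ?_
    have hm' : n ≤ m := by omega
    rw [Dop_coeff]
    rcases eq_or_lt_of_le hm' with rfl | h'
    · rw [coeff_eq_zero_of_natDegree_lt (by rw [P_natDegree]; omega), sub_self]
      ring
    · rw [coeff_eq_zero_of_natDegree_lt (by rw [P_natDegree]; omega),
        coeff_eq_zero_of_natDegree_lt (by rw [P_natDegree]; omega)]
      ring
  omega

lemma key (n : ℕ) (hn : 1 ≤ n) (x : Fin n → ℝ) (hinj : Function.Injective x)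
    (hx0 : ∀ i, x i ≠ 0) :
    (∀ i, 2 * (∑ j ∈ Finset.univ.erase i, 1 / (x i - x j)) + 2 / x i = 1)
      ↔ ∀ i, (lagPoly n).eval (x i) = 0 := by
  set c : ℝ := (-1) ^ n * (n.factorial : ℝ) with hc_def
  have hfacne : (n.factorial : ℝ) ≠ 0 := Nat.cast_ne_zero.mpr (Nat.factorial_ne_zero n)
  have hc : c ≠ 0 := by
    apply mul_ne_zero _ hfacne
    exact pow_ne_zero _ (by norm_num)
  have hsq : ((-1 : ℝ) ^ n) * ((-1 : ℝ) ^ n) = 1 := by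
    rw [← pow_add]
    exact (neg_one_pow_eq_one_iff_even (by norm_num)).mpr ⟨n, rfl⟩
  have hctop : c * ((-1 : ℝ) ^ n / (n.factorial : ℝ)) = 1 := by
    rw [hc_def, show ((-1 : ℝ) ^ n * (n.factorial : ℝ)) * ((-1 : ℝ) ^ n / (n.factorial : ℝ))
        = (((-1 : ℝ) ^ n) * ((-1 : ℝ) ^ n)) * ((n.factorial : ℝ) / (n.factorial : ℝ)) from by
      ring]
    rw [hsq, div_self hfacne, one_mul]
  have hcinv : c⁻¹ = (-1 : ℝ) ^ n / (n.factorial : ℝ) := by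
    rw [hc_def, mul_inv, div_eq_mul_inv]
    congr 1
    rw [← inv_pow]
    norm_num
  have hP1 : (Ppoly n x).coeff n = 1 := by
    have := (P_monic n x).coeff_natDegree
    rwa [P_natDegree] at this
  constructor
  · intro h
    have hDP : Dop n (Ppoly n x) = 0 := by
      apply eq_zero_of_natDegree_lt_card_of_eval_eq_zero _ hinj
      · intro i
        exact (Dop_P_eval_zero_iff n x hinj i (hx0 i)).mpr (h i)
      · simpa using DopP_natDegree_lt n hn x
    have hrzero : Ppoly n x - C c * lagPoly n = 0 := by
      set r : ℝ[X] := Ppoly n x - C c * lagPoly n with hr_def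
      have hDr : Dop n r = 0 := by
        rw [hr_def, Dop_sub_C_mul, hDP, Dop_lagPoly, mul_zero, sub_zero]
      have hhigh : ∀ m, n ≤ m → r.coeff m = 0 := by
        intro m hm
        rcases eq_or_lt_of_le hm with rfl | h'
        · rw [hr_def, coeff_sub, coeff_C_mul, lagPoly_coeff_top, hP1, hctop, sub_self]
        · rw [hr_def, coeff_sub, coeff_C_mul,
            coeff_eq_zero_of_natDegree_lt (by rw [P_natDegree]; omega),
            lagPoly_coeff_gt n m h', mul_zero, sub_zero]
      have hall : ∀ j, r.coeff (n - j) = 0 := by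
        intro j
        induction j with
        | zero => simpa using hhigh n le_rfl
        | succ j ih =>
          by_cases hj : j < n
          · have hk : n - (j + 1) + 1 = n - j := by omega
            have hDrk := congrArg (fun p => p.coeff (n - (j + 1))) hDr
            simp only [coeff_zero] at hDrk
            rw [Dop_coeff, hk, ih, mul_zero, zero_add] at hDrk
            have hne : (n : ℝ) - ((n - (j + 1) : ℕ) : ℝ) ≠ 0 := by
              have h1 : (n - (j + 1) : ℕ) < n := by omega
              have h2 : ((n - (j + 1) : ℕ) : ℝ) < (n : ℝ) := by exact_mod_cast h1
              intro h; linarith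
            exact (mul_eq_zero.mp hDrk).resolve_left hne
          · have heq : n - (j + 1) = n - j := by omega
            rw [heq]; exact ih
      ext m
      rw [coeff_zero]
      by_cases hm : n ≤ m
      · exact hhigh m hm
      · have : m = n - (n - m) := by omega
        rw [this]; exact hall _
    have hP : Ppoly n x = C c * lagPoly n := sub_eq_zero.mp hrzero
    intro i
    have h0 : (Ppoly n x).eval (x i) = 0 := P_eval n x i
    rw [hP, eval_mul, eval_C, mul_eq_zero] at h0
    exact h0.resolve_left hc
  · intro h
    have hrzero : lagPoly n - C c⁻¹ * Ppoly n x = 0 := by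
      apply eq_zero_of_natDegree_lt_card_of_eval_eq_zero _ hinj
      · intro i
        simp [h i, P_eval n x i]
      · have hdeg : (lagPoly n - C c⁻¹ * Ppoly n x).natDegree ≤ n - 1 := by
          refine natDegree_le_iff_coeff_eq_zero.mpr fun m hm => ?_
          have hm' : n ≤ m := by omega
          rcases eq_or_lt_of_le hm' with rfl | h'
          · rw [coeff_sub, coeff_C_mul, lagPoly_coeff_top, hP1, mul_one, hcinv, sub_self]
          · rw [coeff_sub, coeff_C_mul, lagPoly_coeff_gt n m h',
              coeff_eq_zero_of_natDegree_lt (by rw [P_natDegree]; omega), mul_zero, sub_zero]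
        simpa using lt_of_le_of_lt hdeg (by omega : n - 1 < n)
    have hlag : lagPoly n = C c⁻¹ * Ppoly n x := sub_eq_zero.mp hrzero
    have hP : Ppoly n x = C c * lagPoly n := by
      rw [hlag, ← mul_assoc, ← C_mul, mul_inv_cancel₀ hc, C_1, one_mul]
    have hDP : Dop n (Ppoly n x) = 0 := by
      rw [hP, Dop_C_mul, Dop_lagPoly, mul_zero]
    intro i
    refine (Dop_P_eval_zero_iff n x hinj i (hx0 i)).mp ?_
    rw [hDP, eval_zero]

/-- The generalized Laguerre polynomial
`L_n^{(α)}(x) = ∑_{k=0}^n binom(n+α, n−k) · (−x)^k / k!`, where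
`binom(n+α, n−k) = ((α+k+1)(α+k+2)⋯(α+n))/(n−k)!`. -/
noncomputable def laguerre (n : ℕ) (α : ℝ) (x : ℝ) : ℝ :=
  ∑ k ∈ Finset.range (n + 1),
    ((∏ m ∈ Finset.Ico k n, (α + (m : ℝ) + 1)) / ((n - k).factorial : ℝ))
      * ((-x) ^ k / (k.factorial : ℝ))

lemma laguerre_eq (n : ℕ) (t : ℝ) : laguerre n 1 t = (lagPoly n).eval t := by
  rw [laguerre]
  exact laguerre_eq_eval n t

/-- For `N ≥ 2` and `y` with `y_1 > ⋯ > y_{N−1} > |y_N|`: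
`[y_N = 0` and `4 ∑_{j ≠ i} 1/(y_i² − y_j²) = 1` for every `i = 1, …, N−1]` holds if
and only if `[y_N = 0` and `L_{N−1}^{(1)}(y_i²/2) = 0` for every `i = 1, …, N−1]`. -/
theorem stationary_iff_laguerre_zeros_D (N : ℕ) (hN : 2 ≤ N)
    (y : Fin N → ℝ)
    (hy : (∀ i j : Fin N, i < j → j.val + 1 < N → y j < y i)
      ∧ |y ⟨N - 1, by omega⟩| < y ⟨N - 2, by omega⟩) :
    (y ⟨N - 1, by omega⟩ = 0
        ∧ ∀ i : Fin N, i.val + 1 < N →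
            4 * (∑ j ∈ Finset.univ.erase i, 1 / (y i ^ 2 - y j ^ 2)) = 1)
      ↔ (y ⟨N - 1, by omega⟩ = 0
        ∧ ∀ i : Fin N, i.val + 1 < N → laguerre (N - 1) 1 (y i ^ 2 / 2) = 0) := by
  obtain ⟨m, rfl⟩ : ∃ m, N = m + 2 := ⟨N - 2, by omega⟩
  obtain ⟨hyord, hyabs⟩ := hy
  have main : y (⟨m + 2 - 1, by omega⟩ : Fin (m + 2)) = 0 →
      ((∀ i : Fin (m + 2), i.val + 1 < m + 2 →
          4 * (∑ j ∈ Finset.univ.erase i, 1 / (y i ^ 2 - y j ^ 2)) = 1)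
        ↔ (∀ i : Fin (m + 2), i.val + 1 < m + 2 →
            laguerre (m + 2 - 1) 1 (y i ^ 2 / 2) = 0)) := by
    intro h0
    set x : Fin (m + 1) → ℝ := fun i => y (Fin.castSucc i) ^ 2 / 2 with hxdef
    have hmpos : 0 < y (⟨m, by omega⟩ : Fin (m + 2)) :=
      lt_of_le_of_lt (abs_nonneg _) hyabs
    have hpos : ∀ i : Fin (m + 1), 0 < y (Fin.castSucc i) := by
      intro i
      rcases eq_or_lt_of_le (show i.val ≤ m from by omega) with he | hlt
      · have : Fin.castSucc i = (⟨m, by omega⟩ : Fin (m + 2)) := Fin.ext he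
        rw [this]; exact hmpos
      · exact lt_trans hmpos
          (hyord (Fin.castSucc i) ⟨m, by omega⟩ (by rw [Fin.lt_def]; simpa using hlt) (by simp))
    have hxpos : ∀ i, 0 < x i := fun i => div_pos (pow_pos (hpos i) 2) two_pos
    have hx0 : ∀ i, x i ≠ 0 := fun i => ne_of_gt (hxpos i)
    have hmono : ∀ i j : Fin (m + 1), i < j → x j < x i := by
      intro i j hij
      have hyy : y (Fin.castSucc j) < y (Fin.castSucc i) :=
        hyord _ _ (by rwa [Fin.castSucc_lt_castSucc_iff]) (by have := j.isLt; simp only [Fin.coe_castSucc]; omega)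
      have := pow_lt_pow_left₀ hyy (le_of_lt (hpos j)) (two_ne_zero)
      rw [hxdef]
      simp only
      linarith
    have hinj : Function.Injective x := by
      intro a b hab
      rcases lt_trichotomy a b with h | h | h
      · exact absurd hab (ne_of_gt (hmono a b h))
      · exact h
      · exact absurd hab (ne_of_lt (hmono b a h))
    have hlast : y (Fin.last (m + 1)) = 0 := h0
    have heq : ∀ i' : Fin (m + 1),
        4 * (∑ j ∈ Finset.univ.erase (Fin.castSucc i'),
              1 / (y (Fin.castSucc i') ^ 2 - y j ^ 2))
          = 2 * (∑ j ∈ Finset.univ.erase i', 1 / (x i' - x j)) + 2 / x i' - 1 + 1 := by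
      intro i'
      have hxi : y (Fin.castSucc i') ^ 2 = 2 * x i' := by rw [hxdef]; ring
      have hdiag : 1 / (y (Fin.castSucc i') ^ 2 - y (Fin.castSucc i') ^ 2) = 0 := by
        rw [sub_self, div_zero]
      have hdiag' : 1 / (x i' - x i') = 0 := by rw [sub_self, div_zero]
      have hterm : ∀ j : Fin (m + 1),
          1 / (y (Fin.castSucc i') ^ 2 - y (Fin.castSucc j) ^ 2)
            = 1 / 2 * (1 / (x i' - x j)) := by
        intro j
        have hd : y (Fin.castSucc i') ^ 2 - y (Fin.castSucc j) ^ 2 = 2 * (x i' - x j) := by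
          rw [hxdef]; ring
        rw [hd, one_div, mul_inv, ← one_div, ← one_div]
      rw [Finset.sum_erase (f := fun j => 1 / (y (Fin.castSucc i') ^ 2 - y j ^ 2))
        Finset.univ hdiag, Fin.sum_univ_castSucc]
      rw [Finset.sum_congr rfl (fun j _ => hterm j), ← Finset.mul_sum,
        ← Finset.sum_erase (f := fun j => 1 / (x i' - x j)) Finset.univ hdiag', hlast, hxi]
      have hx := hx0 i'
      field_simp
      ring
    have hbridge : ∀ (Φ : Fin (m + 2) → Prop),
        (∀ i : Fin (m + 2), i.val + 1 < m + 2 → Φ i) ↔ ∀ i' : Fin (m + 1), Φ (Fin.castSucc i') := by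
      intro Φ
      constructor
      · intro h i'
        exact h (Fin.castSucc i') (by have := i'.isLt; simp only [Fin.coe_castSucc]; omega)
      · intro h i hi
        have : i = Fin.castSucc (⟨i.val, by omega⟩ : Fin (m + 1)) := Fin.ext rfl
        rw [this]
        exact h _
    rw [hbridge, hbridge]
    have hlageq : ∀ i' : Fin (m + 1),
        laguerre (m + 2 - 1) 1 (y (Fin.castSucc i') ^ 2 / 2) = (lagPoly (m + 1)).eval (x i') := by
      intro i'
      rw [hxdef]
      exact laguerre_eq (m + 1) _
    constructor
    · intro h
      have h' : ∀ i', 2 * (∑ j ∈ Finset.univ.erase i', 1 / (x i' - x j)) + 2 / x i' = 1 := by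
        intro i'
        have := h i'
        rw [heq i'] at this
        linarith
      have := (key (m + 1) (by omega) x hinj hx0).mp h'
      intro i'
      rw [hlageq i']
      exact this i'
    · intro h
      have h' : ∀ i', (lagPoly (m + 1)).eval (x i') = 0 := by
        intro i'
        rw [← hlageq i']
        exact h i'
      have hE := (key (m + 1) (by omega) x hinj hx0).mpr h'
      intro i'
      rw [heq i', hE i']
      ring
  constructor
  · rintro ⟨h0, h⟩
    exact ⟨h0, (main h0).mp h⟩
  · rintro ⟨h0, h⟩
    exact ⟨h0, (main h0).mpr h⟩
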